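/- For every k ≥ 3, every finite simple graph G on vertex set {1,…,n} is 1^k-representable: there exists a word w over the alphabet {1,…,n} in which every vertex occurs, such that for all distinct x,y, xy is an edge of G if and only if the subword of w restricted to letters {x,y} contains no k consecutive equal letters. -/

import Mathlib

/-- A word has a `1^k`-match if it contains `k` consecutive equal letters. -/
def HasPowMatch {α : Type*} (k : ℕ) (w : List α) : Prop :=
  ∃ z : α, List.replicate k z <:+: w

namespace PowRep
open List

variable {α : Type*} [DecidableEq α]

/-- run-length automaton step: state = (last letter, current run length) -/
def stepf (s : Option α × ℕ) (a : α) : Option α × ℕ :=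
  if s.1 = some a then (some a, s.2 + 1) else (some a, 1)

def fstf (s : Option α × ℕ) (l : List α) : Option α × ℕ := l.foldl stepf s

def mrf : Option α × ℕ → List α → ℕ
  | s, [] => s.2
  | s, a :: l => max s.2 (mrf (stepf s a) l)

@[simp] lemma fstf_nil (s : Option α × ℕ) : fstf s [] = s := rfl
@[simp] lemma fstf_cons (s : Option α × ℕ) (a : α) (l : List α) :
    fstf s (a :: l) = fstf (stepf s a) l := rfl
lemma fstf_append (s : Option α × ℕ) (l₁ l₂ : List α) :
    fstf s (l₁ ++ l₂) = fstf (fstf s l₁) l₂ := foldl_append ..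
@[simp] lemma mrf_nil (s : Option α × ℕ) : mrf s ([] : List α) = s.2 := rfl
@[simp] lemma mrf_cons (s : Option α × ℕ) (a : α) (l : List α) :
    mrf s (a :: l) = max s.2 (mrf (stepf s a) l) := rfl

lemma le_mrf (s : Option α × ℕ) (l : List α) : s.2 ≤ mrf s l := by
  cases l with
  | nil => exact le_rfl
  | cons a l => exact le_max_left _ _

lemma mrf_append (s : Option α × ℕ) (l₁ l₂ : List α) :
    mrf s (l₁ ++ l₂) = max (mrf s l₁) (mrf (fstf s l₁) l₂) := by
  induction l₁ generalizing s with
  | nil => simp [Nat.max_eq_right (le_mrf s l₂)]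
  | cons a l ih => simp [ih, Nat.max_assoc]

lemma fstf_replicate_same (z : α) (r m : ℕ) :
    fstf (some z, r) (replicate m z) = (some z, r + m) := by
  induction m generalizing r with
  | zero => simp
  | succ m ih => simp [replicate_succ, stepf, ih]; omega

lemma mrf_replicate_same (z : α) (r m : ℕ) :
    mrf (some z, r) (replicate m z) = r + m := by
  induction m generalizing r with
  | zero => simp
  | succ m ih => simp [replicate_succ, stepf, ih]; omega

lemma fstf_replicate_ne {c : Option α} (z : α) (h : c ≠ some z) (r m : ℕ) (hm : m ≠ 0) :
    fstf (c, r) (replicate m z) = (some z, m) := by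
  cases m with
  | zero => omega
  | succ m =>
    have : stepf (c, r) z = (some z, 1) := by simp [stepf, h]
    simp [replicate_succ, this, fstf_replicate_same]
    omega

lemma mrf_replicate_ne {c : Option α} (z : α) (h : c ≠ some z) (r m : ℕ) :
    mrf (c, r) (replicate m z) ≤ max r m := by
  cases m with
  | zero => simp
  | succ m =>
    have hs : stepf (c, r) z = (some z, 1) := by simp [stepf, h]
    simp [replicate_succ, hs, mrf_replicate_same]
    omega

lemma m_le_mrf_replicate (z : α) (s : Option α × ℕ) (m : ℕ) (hm : 1 ≤ m) :
    m ≤ mrf s (replicate m z) := by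
  cases m with
  | zero => omega
  | succ m =>
    obtain ⟨c, r⟩ := s
    by_cases h : c = some z
    · subst h; rw [mrf_replicate_same]; omega
    · rw [show replicate (m+1) z = z :: replicate m z from replicate_succ .. ]
      have hs : stepf (c, r) z = (some z, 1) := by simp [stepf, h]
      simp [hs, mrf_replicate_same]

lemma mrf_ge_of_replicate_infix {z : α} {l : List α} {m : ℕ} (hm : 1 ≤ m)
    (h : replicate m z <:+: l) (s : Option α × ℕ) : m ≤ mrf s l := by
  obtain ⟨u, v, huv⟩ := h
  subst huv
  rw [mrf_append, mrf_append]
  have := m_le_mrf_replicate z (fstf s u) m hm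
  omega

lemma no_match_of_mrf_lt {k : ℕ} {l : List α} (hk : 1 ≤ k)
    (h : mrf (none, 0) l < k) : ¬ HasPowMatch k l := by
  rintro ⟨z, hz⟩
  have := mrf_ge_of_replicate_infix hk hz (none, 0)
  omega


section Shapes
variable {c d : α} {k : ℕ}

lemma mrf_replicate_ne_eq {c : Option α} (z : α) (h : c ≠ some z) (r m : ℕ) (hm : m ≠ 0) :
    mrf (c, r) (replicate m z) = max r m := by
  cases m with
  | zero => omega
  | succ m =>
    have hs : stepf (c, r) z = (some z, 1) := by simp [stepf, h]
    simp [replicate_succ, hs, mrf_replicate_same]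
    omega

lemma alt_flat (hdc : d ≠ c) (m : ℕ) :
    fstf (some d, 1) ((replicate m [c, d]).flatten) = (some d, 1) ∧
    mrf (some d, 1) ((replicate m [c, d]).flatten) = 1 := by
  induction m with
  | zero => simp
  | succ m ih =>
    have hf : fstf ((some d : Option α), 1) [c, d] = (some d, 1) := by
      simp [fstf, foldl, stepf, hdc, Ne.symm hdc]
    have hm : mrf ((some d : Option α), 1) [c, d] = 1 := by
      simp [mrf, stepf, hdc, Ne.symm hdc]
    rw [replicate_succ, flatten_cons, mrf_append, fstf_append, hf, hm, ih.1, ih.2]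
    simp

/-- shape A : block pair disjoint from {x,y} -/
lemma shapeA (hdc : d ≠ c) (hk : 3 ≤ k) :
    mrf (some d, 1) ((replicate (k-1) [c, d]).flatten ++ [c, d]) ≤ k - 1 ∧
    fstf (some d, 1) ((replicate (k-1) [c, d]).flatten ++ [c, d]) = (some d, 1) := by
  rw [mrf_append, fstf_append, (alt_flat hdc (k-1)).1, (alt_flat hdc (k-1)).2]
  constructor
  · simp [mrf, stepf, hdc, Ne.symm hdc]; omega
  · simp [fstf, foldl, stepf, hdc, Ne.symm hdc]

/-- shape B1 : block pair (a,b) with a = c -/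
lemma shapeB1 (hdc : d ≠ c) (hk : 3 ≤ k) :
    mrf (some d, 1) ((replicate (k-1) [c, d]).flatten ++ ([c] ++ [c, d])) ≤ k - 1 ∧
    fstf (some d, 1) ((replicate (k-1) [c, d]).flatten ++ ([c] ++ [c, d])) = (some d, 1) := by
  rw [mrf_append, fstf_append, (alt_flat hdc (k-1)).1, (alt_flat hdc (k-1)).2]
  constructor
  · simp [mrf, stepf, hdc, Ne.symm hdc]; omega
  · simp [fstf, foldl, stepf, hdc, Ne.symm hdc]

/-- shape B2 : block pair (a,b) with a = d -/
lemma shapeB2 (hdc : d ≠ c) (hk : 3 ≤ k) :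
    mrf (some d, 1) ((replicate (k-1) [d, c]).flatten ++ ([d] ++ [c, d])) ≤ k - 1 ∧
    fstf (some d, 1) ((replicate (k-1) [d, c]).flatten ++ ([d] ++ [c, d])) = (some d, 1) := by
  have hcd : c ≠ d := Ne.symm hdc
  obtain ⟨m, hm⟩ : ∃ m, k - 1 = m + 1 := ⟨k - 2, by omega⟩
  rw [hm, replicate_succ, flatten_cons]
  rw [show ([d, c] ++ (replicate m [d, c]).flatten) ++ ([d] ++ [c, d]) =
    [d, c] ++ ((replicate m [d, c]).flatten ++ ([d] ++ [c, d])) from by simp,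
    mrf_append, fstf_append]
  have hf : fstf ((some d : Option α), 1) [d, c] = (some c, 1) := by
    simp [fstf, foldl, stepf, hdc, hcd]
  have hm2 : mrf ((some d : Option α), 1) [d, c] = 2 := by
    simp [mrf, stepf, hdc, hcd]
  rw [hf, hm2, mrf_append, fstf_append, (alt_flat hcd m).1, (alt_flat hcd m).2]
  constructor
  · simp [mrf, stepf, hdc, hcd]; omega
  · simp [fstf, foldl, stepf, hdc, hcd]

/-- shape C1 : block pair (a,b) with b = c (so the repeated letter is d) -/
lemma shapeC1 (hdc : d ≠ c) (hk : 3 ≤ k) :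
    mrf (some d, 1) (c :: (replicate (k-1) d ++ [c] ++ [c, d])) ≤ k - 1 ∧
    fstf (some d, 1) (c :: (replicate (k-1) d ++ [c] ++ [c, d])) = (some d, 1) := by
  have hcd : c ≠ d := Ne.symm hdc
  have h1 : stepf ((some d : Option α), 1) c = (some c, 1) := by simp [stepf, hdc]
  have hrne : (some c : Option α) ≠ some d := by simp [hcd]
  constructor
  · rw [mrf_cons, h1, append_assoc, mrf_append,
      fstf_replicate_ne d hrne 1 (k-1) (by omega),
      mrf_replicate_ne_eq d hrne 1 (k-1) (by omega), mrf_append]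
    have hstep : fstf ((some d : Option α), k-1) [c] = (some c, 1) := by
      simp [fstf, foldl, stepf, hdc]
    have hm1 : mrf ((some d : Option α), k-1) [c] = max (k-1) 1 := by
      simp [mrf, stepf, hdc]
    rw [hstep, hm1]
    simp [mrf, stepf, hdc, hcd]; omega
  · rw [fstf_cons, h1, append_assoc, fstf_append,
      fstf_replicate_ne d hrne 1 (k-1) (by omega), fstf_append]
    have hstep : fstf ((some d : Option α), k-1) [c] = (some c, 1) := by
      simp [fstf, foldl, stepf, hdc]
    rw [hstep]
    simp [fstf, foldl, stepf, hdc, hcd]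

/-- shape C2 : block pair (a,b) with b = d (so the repeated letter is c) -/
lemma shapeC2 (hdc : d ≠ c) (hk : 3 ≤ k) :
    mrf (some d, 1) (d :: (replicate (k-1) c ++ [d] ++ [c, d])) ≤ k - 1 ∧
    fstf (some d, 1) (d :: (replicate (k-1) c ++ [d] ++ [c, d])) = (some d, 1) := by
  have hcd : c ≠ d := Ne.symm hdc
  have h1 : stepf ((some d : Option α), 1) d = (some d, 2) := by simp [stepf]
  have hrne : (some d : Option α) ≠ some c := by simp [hdc]
  constructor
  · rw [mrf_cons, h1, append_assoc, mrf_append,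
      fstf_replicate_ne c hrne 2 (k-1) (by omega),
      mrf_replicate_ne_eq c hrne 2 (k-1) (by omega), mrf_append]
    have hstep : fstf ((some c : Option α), k-1) [d] = (some d, 1) := by
      simp [fstf, foldl, stepf, hcd]
    have hm1 : mrf ((some c : Option α), k-1) [d] = max (k-1) 1 := by
      simp [mrf, stepf, hcd]
    rw [hstep, hm1]
    simp [mrf, stepf, hdc, hcd]; omega
  · rw [fstf_cons, h1, append_assoc, fstf_append,
      fstf_replicate_ne c hrne 2 (k-1) (by omega), fstf_append]
    have hstep : fstf ((some c : Option α), k-1) [d] = (some d, 1) := by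
      simp [fstf, foldl, stepf, hcd]
    rw [hstep]
    simp [fstf, foldl, stepf, hdc, hcd]

end Shapes


section Constr

/-- the block for a non-edge (a,b) -/
def blkB (k : ℕ) (V : List α) (a b : α) : List α :=
  b :: ((List.replicate (k-1) (a :: V.filter (fun u => ¬(u = a ∨ u = b)))).flatten ++ [a, b])

/-- the representing word -/
def wordB (k : ℕ) (V : List α) (L : List (α × α)) : List α :=
  V ++ L.foldr (fun pr acc => blkB k V pr.1 pr.2 ++ V ++ acc) []

omit [DecidableEq α] in
lemma flatten_rep_singleton (m : ℕ) (t : α) : (replicate m ([t] : List α)).flatten = replicate m t := by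
  induction m with
  | zero => rfl
  | succ m ih => simp [replicate_succ, ih]

lemma filter_eq_singleton {t : α} {V : List α} (hnd : V.Nodup) (ht : t ∈ V) {P : α → Bool}
    (h : ∀ u, P u = true ↔ u = t) : V.filter P = [t] := by
  induction V with
  | nil => simp at ht
  | cons v V ih =>
    rcases nodup_cons.mp hnd with ⟨hv, hnd'⟩
    by_cases hvt : v = t
    · subst hvt
      rw [filter_cons_of_pos (by simp [h])]
      have hnil : V.filter P = [] := by
        rw [filter_eq_nil_iff]
        intro u hu hPu
        exact hv (((h u).1 hPu) ▸ hu)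
      rw [hnil]
    · have ht' : t ∈ V := by
        rcases mem_cons.mp ht with h' | h'
        · exact absurd h'.symm hvt
        · exact h'
      rw [filter_cons_of_neg (by simp [h, hvt])]
      exact ih hnd' ht'

lemma nodup_two {l : List α} {x y : α} (hxy : x ≠ y) (hnd : l.Nodup) (hx : x ∈ l) (hy : y ∈ l)
    (hall : ∀ u ∈ l, u = x ∨ u = y) : l = [x, y] ∨ l = [y, x] := by
  have h1 : l <+~ [x, y] := hnd.subperm (fun u hu => by rcases hall u hu with rfl | rfl <;> simp)
  have h2 : [x, y] <+~ l := by
    refine Nodup.subperm (by simp [hxy]) ?_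
    intro u hu
    rcases mem_cons.mp hu with rfl | hu'
    · exact hx
    · simp at hu'; subst hu'; exact hy
  have hp : l ~ [x, y] := h1.antisymm h2
  have hlen : l.length = 2 := by simpa using hp.length_eq
  match l, hlen with
  | [u, v], _ =>
    have hu := hall u (by simp)
    have hv := hall v (by simp)
    have huv : u ≠ v := by simp [nodup_cons] at hnd; exact hnd
    rcases hu with rfl | rfl <;> rcases hv with rfl | rfl
    · exact absurd rfl huv
    · exact Or.inl rfl
    · exact Or.inr rfl
    · exact absurd rfl huv

end Constr


section Chunk

lemma chunk {k : ℕ} (hk : 3 ≤ k) {x y c d : α} {V : List α} (hnd : V.Nodup) (hV : ∀ v, v ∈ V)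
    {P : α → Bool} (hP : ∀ u, P u = true ↔ (u = x ∨ u = y))
    (hE : V.filter P = [c, d]) (hdc : d ≠ c)
    (hset : (c = x ∧ d = y) ∨ (c = y ∧ d = x))
    {a b : α} (hab : a ≠ b) (h1 : ¬(a = x ∧ b = y)) (h2 : ¬(a = y ∧ b = x)) :
    mrf (some d, 1) (List.filter P (blkB k V a b) ++ [c, d]) ≤ k - 1 ∧
    fstf (some d, 1) (List.filter P (blkB k V a b) ++ [c, d]) = (some d, 1) := by
  have hxy : x ≠ y := by
    rcases hset with ⟨rfl, rfl⟩ | ⟨rfl, rfl⟩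
    · exact fun h => hdc h.symm
    · exact hdc
  by_cases hA : a = x ∨ a = y <;> by_cases hB : b = x ∨ b = y
  · -- both in {x,y} : impossible
    exfalso
    rcases hA with rfl | rfl <;> rcases hB with rfl | rfl
    · exact hab rfl
    · exact h1 ⟨rfl, rfl⟩
    · exact h2 ⟨rfl, rfl⟩
    · exact hab rfl
  · -- a ∈ {x,y}, b ∉ {x,y} : shapes B
    have hPa : P a = true := (hP a).2 hA
    have hPb : P b = false := Bool.eq_false_iff.mpr (fun h => hB ((hP b).1 h))
    have hfB : List.filter P (blkB k V a b) =
        (replicate (k-1) (a :: List.filter P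
          (V.filter (fun u => ¬(u = a ∨ u = b))))).flatten ++ [a] := by
      simp [blkB, filter_append, filter_flatten, map_replicate, filter_cons, hPa, hPb]
    -- the other letter t of {x,y}
    rcases hA with rfl | rfl
    · -- a = x, other letter is y
      have hR : List.filter P (V.filter (fun u => ¬(u = a ∨ u = b))) = [y] := by
        rw [filter_filter]
        apply filter_eq_singleton hnd (hV y)
        intro u
        simp only [Bool.and_eq_true, decide_eq_true_eq, hP]
        constructor
        · rintro ⟨hor, hna⟩
          rcases hor with rfl | rfl
          · exact absurd (Or.inl rfl) hna
          · rfl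
        · rintro rfl
          refine ⟨Or.inr rfl, ?_⟩
          rintro (rfl | rfl)
          · exact hxy rfl
          · exact hB (Or.inr rfl)
      rw [hfB, hR]
      rcases hset with ⟨rfl, rfl⟩ | ⟨rfl, rfl⟩
      · rw [append_assoc]; exact shapeB1 hdc hk
      · rw [append_assoc]; exact shapeB2 hdc hk
    · -- a = y, other letter is x
      have hR : List.filter P (V.filter (fun u => ¬(u = a ∨ u = b))) = [x] := by
        rw [filter_filter]
        apply filter_eq_singleton hnd (hV x)
        intro u
        simp only [Bool.and_eq_true, decide_eq_true_eq, hP]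
        constructor
        · rintro ⟨hor, hna⟩
          rcases hor with rfl | rfl
          · rfl
          · exact absurd (Or.inl rfl) hna
        · rintro rfl
          refine ⟨Or.inl rfl, ?_⟩
          rintro (rfl | rfl)
          · exact hxy rfl
          · exact hB (Or.inl rfl)
      rw [hfB, hR]
      rcases hset with ⟨rfl, rfl⟩ | ⟨rfl, rfl⟩
      · rw [append_assoc]; exact shapeB2 hdc hk
      · rw [append_assoc]; exact shapeB1 hdc hk
  · -- a ∉ {x,y}, b ∈ {x,y} : shapes C
    have hPa : P a = false := Bool.eq_false_iff.mpr (fun h => hA ((hP a).1 h))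
    have hPb : P b = true := (hP b).2 hB
    have hfB : List.filter P (blkB k V a b) =
        b :: ((replicate (k-1) (List.filter P
          (V.filter (fun u => ¬(u = a ∨ u = b))))).flatten ++ [b]) := by
      simp [blkB, filter_append, filter_flatten, map_replicate, filter_cons, hPa, hPb]
    rcases hB with rfl | rfl
    · -- b = x, other letter is y
      have hR : List.filter P (V.filter (fun u => ¬(u = a ∨ u = b))) = [y] := by
        rw [filter_filter]
        apply filter_eq_singleton hnd (hV y)
        intro u
        simp only [Bool.and_eq_true, decide_eq_true_eq, hP]
        constructor
        · rintro ⟨hor, hna⟩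
          rcases hor with rfl | rfl
          · exact absurd (Or.inr rfl) hna
          · rfl
        · rintro rfl
          refine ⟨Or.inr rfl, ?_⟩
          rintro (rfl | rfl)
          · exact hA (Or.inr rfl)
          · exact hxy rfl
      rw [hfB, hR, flatten_rep_singleton]
      rcases hset with ⟨rfl, rfl⟩ | ⟨rfl, rfl⟩
      · rw [cons_append]; exact shapeC1 hdc hk
      · rw [cons_append]; exact shapeC2 hdc hk
    · -- b = y, other letter is x
      have hR : List.filter P (V.filter (fun u => ¬(u = a ∨ u = b))) = [x] := by
        rw [filter_filter]
        apply filter_eq_singleton hnd (hV x)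
        intro u
        simp only [Bool.and_eq_true, decide_eq_true_eq, hP]
        constructor
        · rintro ⟨hor, hna⟩
          rcases hor with rfl | rfl
          · rfl
          · exact absurd (Or.inr rfl) hna
        · rintro rfl
          refine ⟨Or.inl rfl, ?_⟩
          rintro (rfl | rfl)
          · exact hA (Or.inl rfl)
          · exact hxy rfl
      rw [hfB, hR, flatten_rep_singleton]
      rcases hset with ⟨rfl, rfl⟩ | ⟨rfl, rfl⟩
      · rw [cons_append]; exact shapeC2 hdc hk
      · rw [cons_append]; exact shapeC1 hdc hk
  · -- neither in {x,y} : shape A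
    have hPa : P a = false := Bool.eq_false_iff.mpr (fun h => hA ((hP a).1 h))
    have hPb : P b = false := Bool.eq_false_iff.mpr (fun h => hB ((hP b).1 h))
    have hfB : List.filter P (blkB k V a b) =
        (replicate (k-1) (List.filter P
          (V.filter (fun u => ¬(u = a ∨ u = b))))).flatten := by
      simp [blkB, filter_append, filter_flatten, map_replicate, filter_cons, hPa, hPb]
    have hR : List.filter P (V.filter (fun u => ¬(u = a ∨ u = b))) = [c, d] := by
      rw [filter_filter, ← hE]
      apply filter_congr
      intro u hu
      by_cases hPu : P u = true
      · have hor := (hP u).1 hPu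
        have hua : ¬ u = a := fun h => hA (h ▸ hor)
        have hub : ¬ u = b := fun h => hB (h ▸ hor)
        simp [hPu, hua, hub]
      · have : P u = false := Bool.eq_false_iff.mpr hPu
        simp [this]
    rw [hfB, hR]
    exact shapeA hdc hk

end Chunk


section Word

lemma inner_filter {P : α → Bool} {c d : α} (k : ℕ) (V : List α) (hE : V.filter P = [c, d]) :
    ∀ L : List (α × α),
    List.filter P (L.foldr (fun pr acc => blkB k V pr.1 pr.2 ++ V ++ acc) []) =
    L.foldr (fun pr acc => (List.filter P (blkB k V pr.1 pr.2) ++ [c, d]) ++ acc) []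
  | [] => by simp
  | pr :: L => by
    rw [foldr_cons, foldr_cons, filter_append, filter_append, hE, inner_filter k V hE L]

lemma inner_bound {k : ℕ} (hk : 3 ≤ k) {x y c d : α} {V : List α} (hnd : V.Nodup)
    (hV : ∀ v, v ∈ V)
    {P : α → Bool} (hP : ∀ u, P u = true ↔ (u = x ∨ u = y))
    (hE : V.filter P = [c, d]) (hdc : d ≠ c)
    (hset : (c = x ∧ d = y) ∨ (c = y ∧ d = x)) :
    ∀ L : List (α × α),
    (∀ pr ∈ L, pr.1 ≠ pr.2 ∧ ¬(pr.1 = x ∧ pr.2 = y) ∧ ¬(pr.1 = y ∧ pr.2 = x)) →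
    mrf (some d, 1)
      (L.foldr (fun pr acc => (List.filter P (blkB k V pr.1 pr.2) ++ [c, d]) ++ acc) []) ≤ k - 1 := by
  intro L
  induction L with
  | nil => intro _; simp; omega
  | cons pr L ih =>
    intro hL
    obtain ⟨hne, hxy1, hxy2⟩ := hL pr mem_cons_self
    have hc := chunk hk hnd hV hP hE hdc hset hne hxy1 hxy2
    rw [foldr_cons, mrf_append, hc.2]
    exact max_le hc.1 (ih (fun q hq => hL q (mem_cons_of_mem _ hq)))

lemma word_bound {k : ℕ} (hk : 3 ≤ k) {x y c d : α} {V : List α} (hnd : V.Nodup)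
    (hV : ∀ v, v ∈ V)
    {P : α → Bool} (hP : ∀ u, P u = true ↔ (u = x ∨ u = y))
    (hE : V.filter P = [c, d]) (hdc : d ≠ c)
    (hset : (c = x ∧ d = y) ∨ (c = y ∧ d = x))
    (L : List (α × α))
    (hL : ∀ pr ∈ L, pr.1 ≠ pr.2 ∧ ¬(pr.1 = x ∧ pr.2 = y) ∧ ¬(pr.1 = y ∧ pr.2 = x)) :
    mrf (none, 0) (List.filter P (wordB k V L)) ≤ k - 1 := by
  rw [wordB, filter_append, hE, inner_filter k V hE L, mrf_append]
  have hf : fstf ((none : Option α), 0) [c, d] = (some d, 1) := by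
    simp [fstf, foldl, stepf, hdc, Ne.symm hdc]
  have hm : mrf ((none : Option α), 0) [c, d] = 1 := by
    simp [mrf, stepf, Ne.symm hdc]
  rw [hf, hm]
  exact max_le (by omega) (inner_bound hk hnd hV hP hE hdc hset L hL)

lemma blk_infix (k : ℕ) (V : List α) :
    ∀ (L : List (α × α)) {pr : α × α}, pr ∈ L →
    blkB k V pr.1 pr.2 <:+: wordB k V L := by
  intro L
  induction L with
  | nil => intro pr h; simp at h
  | cons q L ih =>
    intro pr h
    rcases mem_cons.mp h with rfl | h'
    · exact ⟨V, V ++ L.foldr (fun pr acc => blkB k V pr.1 pr.2 ++ V ++ acc) [],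
        by simp [wordB, append_assoc]⟩
    · refine (ih h').trans ⟨V ++ blkB k V q.1 q.2, [], ?_⟩
      simp [wordB, append_assoc]

lemma match_in_block {k : ℕ} (hk : 3 ≤ k) {x y : α} (hxy : x ≠ y) {V : List α}
    {P : α → Bool} (hP : ∀ u, P u = true ↔ (u = x ∨ u = y)) :
    replicate k x <:+: List.filter P (blkB k V x y) := by
  obtain ⟨m, rfl⟩ : ∃ m, k = m + 1 := ⟨k - 1, by omega⟩
  have hPx : P x = true := (hP x).2 (Or.inl rfl)
  have hPy : P y = true := (hP y).2 (Or.inr rfl)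
  have hRnil : List.filter P (V.filter (fun u => ¬(u = x ∨ u = y))) = [] := by
    rw [filter_filter, filter_eq_nil_iff]
    intro u hu
    simp only [Bool.and_eq_true, decide_eq_true_eq, hP]
    rintro ⟨hor, hna⟩
    exact hna hor
  have hxR : List.filter P (x :: V.filter (fun u => ¬(u = x ∨ u = y))) = [x] := by
    rw [filter_cons_of_pos hPx, hRnil]
  have hfB : List.filter P (blkB (m+1) V x y) = y :: (replicate (m+1-1) x ++ [x, y]) := by
    rw [blkB, filter_cons_of_pos hPy, filter_append, filter_flatten, map_replicate, hxR,
      flatten_rep_singleton]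
    simp [filter_cons, hPx, hPy]
  rw [hfB]
  refine ⟨[y], [y], ?_⟩
  simp [Nat.add_sub_cancel, replicate_succ', append_assoc]

end Word


end PowRep

open PowRep List

/-- For every k ≥ 3, every finite simple graph on {1,…,n} (modeled as
`Fin n`) is 1^k-representable. -/
theorem stmt_0 (n k : ℕ) (hk : 3 ≤ k) (G : SimpleGraph (Fin n)) :
    ∃ w : List (Fin n), (∀ v : Fin n, v ∈ w) ∧
      ∀ x y : Fin n, x ≠ y →
        (G.Adj x y ↔ ¬ HasPowMatch k (w.filter (fun a => a = x ∨ a = y))) := by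

  classical
  set V : List (Fin n) := List.finRange n with hVdef
  have hndV : V.Nodup := List.nodup_finRange n
  have hVmem : ∀ v : Fin n, v ∈ V := List.mem_finRange
  set L : List (Fin n × Fin n) :=
    (V.product V).filter (fun pr => pr.1 ≠ pr.2 ∧ ¬ G.Adj pr.1 pr.2) with hLdef
  refine ⟨wordB k V L, ?_, ?_⟩
  · intro v
    exact List.mem_append_left _ (hVmem v)
  · intro x y hxy
    set P : Fin n → Bool := fun a => decide (a = x ∨ a = y) with hPdef
    have hP : ∀ u : Fin n, P u = true ↔ (u = x ∨ u = y) := by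
      intro u; simp [hPdef]
    have hsub : ∃ c d, V.filter P = [c, d] ∧ ((c = x ∧ d = y) ∨ (c = y ∧ d = x)) := by
      have hx : x ∈ V.filter P := mem_filter.mpr ⟨hVmem x, (hP x).2 (Or.inl rfl)⟩
      have hy : y ∈ V.filter P := mem_filter.mpr ⟨hVmem y, (hP y).2 (Or.inr rfl)⟩
      have hnd2 : (V.filter P).Nodup := hndV.filter _
      have hall : ∀ u ∈ V.filter P, u = x ∨ u = y := fun u hu => (hP u).1 (of_mem_filter hu)
      rcases nodup_two hxy hnd2 hx hy hall with h | h
      · exact ⟨x, y, h, Or.inl ⟨rfl, rfl⟩⟩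
      · exact ⟨y, x, h, Or.inr ⟨rfl, rfl⟩⟩
    obtain ⟨c, d, hE, hset⟩ := hsub
    have hdc : d ≠ c := by
      rcases hset with ⟨rfl, rfl⟩ | ⟨rfl, rfl⟩
      · exact Ne.symm hxy
      · exact hxy
    constructor
    · intro hAdj
      have hL : ∀ pr ∈ L, pr.1 ≠ pr.2 ∧ ¬(pr.1 = x ∧ pr.2 = y) ∧ ¬(pr.1 = y ∧ pr.2 = x) := by
        intro pr hpr
        have h2 := (mem_filter.mp hpr).2
        simp only [decide_eq_true_eq] at h2
        obtain ⟨hne, hnadj⟩ := h2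
        refine ⟨hne, ?_, ?_⟩
        · rintro ⟨rfl, rfl⟩; exact hnadj hAdj
        · rintro ⟨rfl, rfl⟩; exact hnadj (G.adj_symm hAdj)
      have hbound := word_bound hk hndV hVmem hP hE hdc hset L hL
      exact no_match_of_mrf_lt (by omega) (by omega)
    · intro hno
      by_contra hAdj
      apply hno
      have hmem : (x, y) ∈ L := by
        rw [hLdef, mem_filter]
        refine ⟨pair_mem_product.mpr ⟨hVmem x, hVmem y⟩, ?_⟩
        simp [hxy, hAdj]
      have hinf := blk_infix k V L hmem
      have hfil := hinf.filter P
      exact ⟨x, (match_in_block hk hxy hP).trans hfil⟩
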